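/- Let k, m, s be natural numbers, let ζ ∈ ℂ^k with ζ_i ≠ 0 for every i, and write ζ^v := ∏_{i=1}^k ζ_i^{v_i} for v ∈ ℤ^k. Let a_1, …, a_m, b_1, …, b_m ∈ ℤ^k and c_1, …, c_s ∈ ℤ^k satisfy: for every i ∈ {1,…,m}, ζ^{a_i} − ζ^{b_i} + 1 = 0 and |ζ^{a_i}|² − |ζ^{b_i}|² + 1 = 0; and for every ℓ ∈ {1,…,s}, ζ^{c_ℓ} = 1. Then for no index j ∈ {1,…,m} does 2·b_j belong to the subgroup of ℤ^k generated by the vectors {a_i + a_t : 1 ≤ i, t ≤ m} together with {c_1, …, c_s} (i.e., if 2·b_j lies in this lattice for some j, a contradiction follows). -/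

import Mathlib

/-- **Lattice obstruction, second case** (Proposition 2.6, lattice `L'`).
If `ζ` (with nonzero coordinates) satisfies the Laurent trinomials `x^{aᵢ} - x^{bᵢ} + 1`
together with their squared-modulus versions, and the binomials `x^{cₗ} = 1`,
then no `2 • b j` lies in the subgroup of `ℤ^k` generated by the pairwise sums
`aᵢ + aₜ` together with the `cₗ`. -/
theorem stmt_3 (k m s : ℕ) (ζ : Fin k → ℂ) (hζ0 : ∀ i, ζ i ≠ 0)
    (a b : Fin m → Fin k → ℤ) (c : Fin s → Fin k → ℤ)
    (htri : ∀ i : Fin m, (∏ r, ζ r ^ a i r) - (∏ r, ζ r ^ b i r) + 1 = 0)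
    (habs : ∀ i : Fin m,
      Complex.normSq (∏ r, ζ r ^ a i r) - Complex.normSq (∏ r, ζ r ^ b i r) + 1 = 0)
    (hbin : ∀ ℓ : Fin s, (∏ r, ζ r ^ c ℓ r) = 1) :
    ∀ j : Fin m, (2 : ℤ) • b j ∉
      AddSubgroup.closure
        ((Set.range fun p : Fin m × Fin m => a p.1 + a p.2) ∪ Set.range c) := by
  intro j hj
  set f : (Fin k → ℤ) → ℂ := fun v => ∏ r, ζ r ^ v r with hf
  have hf_ne : ∀ v, f v ≠ 0 := by
    intro v
    exact Finset.prod_ne_zero_iff.2 fun r _ => zpow_ne_zero _ (hζ0 r)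
  have hf_add : ∀ v w, f (v + w) = f v * f w := by
    intro v w
    simp only [hf, ← Finset.prod_mul_distrib]
    exact Finset.prod_congr rfl fun r _ => zpow_add₀ (hζ0 r) _ _
  have hf_neg : ∀ v, f (-v) = (f v)⁻¹ := by
    intro v
    have h : f (-v) * f v = 1 := by
      rw [← hf_add]; simp [hf]
    exact eq_inv_of_mul_eq_one_left h
  -- each α i := f (a i) has real part 0
  have hre : ∀ i : Fin m, (f (a i)).re = 0 := by
    intro i
    have h1 := htri i
    have h2 := habs i
    have hb : (∏ r, ζ r ^ b i r) = (∏ r, ζ r ^ a i r) + 1 := by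
      linear_combination -h1
    rw [hb] at h2
    simp only [Complex.normSq_apply, Complex.add_re, Complex.add_im,
      Complex.one_re, Complex.one_im] at h2
    show (∏ r, ζ r ^ a i r).re = 0
    linear_combination -h2 / 2
  -- everything in the closure has imaginary part 0
  have him : ∀ v ∈ AddSubgroup.closure
      ((Set.range fun p : Fin m × Fin m => a p.1 + a p.2) ∪ Set.range c),
      (f v).im = 0 := by
    intro v hv
    induction hv using AddSubgroup.closure_induction with
    | mem x hx =>
      rcases hx with ⟨p, rfl⟩ | ⟨ℓ, rfl⟩
      · rw [hf_add]
        simp [Complex.mul_im, hre p.1, hre p.2]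
      · show (f (c ℓ)).im = 0
        rw [show f (c ℓ) = 1 from hbin ℓ]; simp
    | zero => show (f 0).im = 0; simp [hf]
    | add x y _ _ hx hy =>
      rw [hf_add, Complex.mul_im, hx, hy]; ring
    | neg x _ hx =>
      rw [hf_neg, Complex.inv_im, hx]; simp
  have h2b : f ((2 : ℤ) • b j) = (f (b j)) ^ 2 := by
    simp only [hf]
    rw [← Finset.prod_pow]
    refine Finset.prod_congr rfl fun r _ => ?_
    have : ((2 : ℤ) • b j) r = b j r * 2 := by simp [mul_comm]
    rw [this, zpow_mul, zpow_two, sq]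
  have him2 := him _ hj
  rw [h2b] at him2
  have hb : f (b j) = f (a j) + 1 := by
    have := htri j
    linear_combination -this
  rw [hb] at him2
  have hre' := hre j
  -- ((α+1)^2).im = 2 (α.re+1) α.im = 2 α.im
  have : (f (a j)).im = 0 := by
    rw [sq, Complex.mul_im] at him2
    simp [Complex.add_re, Complex.add_im, hre'] at him2
    exact him2
  have hzero : f (a j) = 0 := Complex.ext hre' this
  exact hf_ne _ hzero
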